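/- Uniqueness of pluriharmonic symbols: if g, h ∈ H_m(𝔹) satisfy T_g p + T_h* p = 0 for all polynomials p, then g + \overline{h} = 0 as a function on 𝔹 (in particular g is the constant -\overline{h(0)} and h is constant). -/

import Mathlib

open scoped ComplexConjugate Classical

/-- The weight `ρ_m(α) = (m+|α|-1)!/(α!(m-1)!)`. -/
noncomputable def rhoR (m : ℕ) {n : ℕ} (α : Fin n → ℕ) : ℝ :=
  ((m + (∑ i, α i) - 1).factorial : ℝ) /
    ((∏ i, ((α i).factorial : ℝ)) * ((m - 1).factorial : ℝ))

/-- Coefficients of the product of two formal power series. -/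
noncomputable def convCoeff {n : ℕ} (f u : (Fin n → ℕ) → ℂ) : (Fin n → ℕ) → ℂ :=
  fun α => ∑ β ∈ Finset.Iic α, f β * u (α - β)

/-- Coefficients of `T_h* p` for a polynomial `p`. -/
noncomputable def TstarCoeff (m : ℕ) {n : ℕ} (p : (Fin n → ℕ) →₀ ℂ)
    (h : (Fin n → ℕ) → ℂ) : (Fin n → ℕ) → ℂ :=
  fun γ => ∑ α ∈ p.support,
    p α * (if γ ≤ α then ((rhoR m γ / rhoR m α : ℝ) : ℂ) * conj (h (α - γ)) else 0)

/-- Evaluation of a power series with coefficients `f` at a point `z` of the unit ball. -/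
noncomputable def evalSeries {n : ℕ} (f : (Fin n → ℕ) → ℂ) (z : Fin n → ℂ) : ℂ :=
  ∑' α : Fin n → ℕ, f α * ∏ i, z i ^ α i

lemma rhoR_pos (m : ℕ) {n : ℕ} (α : Fin n → ℕ) : 0 < rhoR m α := by
  unfold rhoR
  apply div_pos
  · exact_mod_cast Nat.factorial_pos _
  · apply mul_pos
    · apply Finset.prod_pos
      intro i _
      exact_mod_cast Nat.factorial_pos _
    · exact_mod_cast Nat.factorial_pos _

/-- Uniqueness of pluriharmonic symbols: if `g, h ∈ H_m(𝔹)` satisfy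
`T_g p + T_h* p = 0` for all polynomials `p`, then `g + conj h = 0` as a function on `𝔹`;
in particular `g` is the constant `-conj (h 0)` and `h` is constant. -/
theorem pluriharmonic_symbol_unique (n m : ℕ) (hm : 1 ≤ m)
    (g h : (Fin n → ℕ) → ℂ)
    (hg : Summable fun α => ‖g α‖ ^ 2 / rhoR m α)
    (hh : Summable fun α => ‖h α‖ ^ 2 / rhoR m α)
    (hzero : ∀ p : (Fin n → ℕ) →₀ ℂ, convCoeff g ⇑p + TstarCoeff m p h = 0) :
    (∀ z : Fin n → ℂ, (∑ i, ‖z i‖ ^ 2) < 1 →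
        evalSeries g z + conj (evalSeries h z) = 0) ∧
    (∀ α : Fin n → ℕ, α ≠ 0 → g α = 0 ∧ h α = 0) ∧
    g 0 + conj (h 0) = 0 := by
  -- Key equation from the test polynomial `p = 1` (the monomial `z^0`).
  have key0 : ∀ γ : Fin n → ℕ, g γ + (if γ = 0 then conj (h 0) else 0) = 0 := by
    intro γ
    have hmain := congrFun (hzero (Finsupp.single 0 1)) γ
    simp only [Pi.add_apply, Pi.zero_apply] at hmain
    have hc : convCoeff g ⇑(Finsupp.single (0 : Fin n → ℕ) (1 : ℂ)) γ = g γ := by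
      unfold convCoeff
      rw [Finset.sum_eq_single γ]
      · simp [Finsupp.single_apply]
      · intro β hβ hne
        rw [Finsupp.single_apply, if_neg, mul_zero]
        intro h0
        exact hne (le_antisymm (Finset.mem_Iic.mp hβ) (tsub_eq_zero_iff_le.mp h0.symm))
      · intro hγ
        exact absurd (Finset.mem_Iic.mpr le_rfl) hγ
    have ht : TstarCoeff m (Finsupp.single (0 : Fin n → ℕ) (1 : ℂ)) h γ
        = if γ = 0 then conj (h 0) else 0 := by
      unfold TstarCoeff
      rw [Finsupp.support_single_ne_zero _ one_ne_zero, Finset.sum_singleton]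
      by_cases hγ : γ = 0
      · subst hγ
        simp [Finsupp.single_apply, div_self (rhoR_pos m (0 : Fin n → ℕ)).ne']
      · rw [if_neg hγ, if_neg (fun hle => hγ (le_antisymm hle zero_le)), mul_zero]
    rw [hc, ht] at hmain
    exact hmain
  have hGzero : ∀ α : Fin n → ℕ, α ≠ 0 → g α = 0 := by
    intro α hα
    have := key0 α
    rwa [if_neg hα, add_zero] at this
  have hG0 : g 0 + conj (h 0) = 0 := by
    have := key0 0
    rwa [if_pos rfl] at this
  have hHzero : ∀ α : Fin n → ℕ, α ≠ 0 → h α = 0 := by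
    intro α hα
    have hmain := congrFun (hzero (Finsupp.single α 1)) 0
    simp only [Pi.add_apply, Pi.zero_apply] at hmain
    have hc : convCoeff g ⇑(Finsupp.single α (1 : ℂ)) 0 = 0 := by
      unfold convCoeff
      rw [Finset.sum_eq_single (0 : Fin n → ℕ)]
      · rw [tsub_self, Finsupp.single_apply, if_neg hα, mul_zero]
      · intro β hβ hne
        exact absurd (le_antisymm (Finset.mem_Iic.mp hβ) zero_le) hne
      · intro h0
        exact absurd (Finset.mem_Iic.mpr le_rfl) h0
    have ht : TstarCoeff m (Finsupp.single α (1 : ℂ)) h 0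
        = ((rhoR m (0 : Fin n → ℕ) / rhoR m α : ℝ) : ℂ) * conj (h α) := by
      unfold TstarCoeff
      rw [Finsupp.support_single_ne_zero _ one_ne_zero, Finset.sum_singleton]
      rw [Finsupp.single_apply, if_pos rfl, one_mul, if_pos zero_le, tsub_zero]
    rw [hc, ht, zero_add] at hmain
    have hne : ((rhoR m (0 : Fin n → ℕ) / rhoR m α : ℝ) : ℂ) ≠ 0 := by
      exact_mod_cast (div_pos (rhoR_pos m (0 : Fin n → ℕ)) (rhoR_pos m α)).ne'
    have : conj (h α) = 0 := by
      rcases mul_eq_zero.mp hmain with h1 | h1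
      · exact absurd h1 hne
      · exact h1
    exact star_eq_zero.mp this
  have evalg : ∀ z : Fin n → ℂ, evalSeries g z = g 0 := by
    intro z
    unfold evalSeries
    rw [tsum_eq_single (0 : Fin n → ℕ)]
    · simp
    · intro α hα
      rw [hGzero α hα, zero_mul]
  have evalh : ∀ z : Fin n → ℂ, evalSeries h z = h 0 := by
    intro z
    unfold evalSeries
    rw [tsum_eq_single (0 : Fin n → ℕ)]
    · simp
    · intro α hα
      rw [hHzero α hα, zero_mul]
  refine ⟨fun z _ => ?_, fun α hα => ⟨hGzero α hα, hHzero α hα⟩, hG0⟩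
  rw [evalg z, evalh z]
  exact hG0
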